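/- Let $T : \mathcal{B}(X) \to \mathcal{B}(X)$ be a contraction with modulus $\alpha \in (0,1)$ and let $\lambda \in [0,1)$. Then the operator $T^{(\lambda)}$ defined pointwise by $(T^{(\lambda)} J)(x) = (1-\lambda) \sum_{\ell=1}^\infty \lambda^{\ell-1} (T^\ell J)(x)$ is well-defined as a map $\mathcal{B}(X) \to \mathcal{B}(X)$ and is a contraction with modulus $\alpha_\lambda = \alpha(1-\lambda)/(1 - \lambda\alpha)$. -/

import Mathlib

open Filter Topology

noncomputable def wnorm {X : Type*} (v : X → ℝ) (J : X → ℝ) : ℝ := ⨆ x, |J x| / v x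

def memB {X : Type*} (v : X → ℝ) (J : X → ℝ) : Prop := ∃ C : ℝ, ∀ x, |J x| / v x ≤ C

/-- The λ-operator `(T^{(λ)}J)(x) = (1-λ) ∑_{ℓ=1}^∞ λ^{ℓ-1} (T^ℓ J)(x)`. -/
noncomputable def Tlam {X : Type*} (T : (X → ℝ) → (X → ℝ)) (lam : ℝ)
    (J : X → ℝ) : X → ℝ :=
  fun x => (1 - lam) * ∑' ℓ : ℕ, lam ^ ℓ * (T^[ℓ + 1] J) x

section Aux

variable {X : Type*} [Nonempty X] {v : X → ℝ}

lemma wnorm_le_of (h : ∀ x, |J x| / v x ≤ C) : wnorm v J ≤ C := ciSup_le h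

lemma bddAbove_of_memB {J : X → ℝ} (hJ : memB v J) :
    BddAbove (Set.range fun x => |J x| / v x) := by
  obtain ⟨C, hC⟩ := hJ
  exact ⟨C, by rintro _ ⟨x, rfl⟩; exact hC x⟩

lemma abs_le_wnorm (hv : ∀ x, 0 < v x) {J : X → ℝ} (hJ : memB v J) (x : X) :
    |J x| ≤ wnorm v J * v x := by
  have h := le_ciSup (bddAbove_of_memB hJ) x
  rwa [div_le_iff₀ (hv x)] at h

lemma memB_sub (hv : ∀ x, 0 < v x) {f g : X → ℝ} (hf : memB v f) (hg : memB v g) :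
    memB v (fun x => f x - g x) := by
  obtain ⟨C, hC⟩ := hf; obtain ⟨D, hD⟩ := hg
  refine ⟨C + D, fun x => ?_⟩
  calc |f x - g x| / v x ≤ (|f x| + |g x|) / v x := by
        gcongr
        · exact (hv x).le
        · exact abs_sub _ _
    _ = |f x| / v x + |g x| / v x := add_div _ _ _
    _ ≤ C + D := add_le_add (hC x) (hD x)

lemma wnorm_triangle (hv : ∀ x, 0 < v x) {f g : X → ℝ}
    (hfg : memB v (fun x => f x - g x)) (hg : memB v g) :
    wnorm v f ≤ wnorm v (fun x => f x - g x) + wnorm v g := by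
  apply ciSup_le
  intro x
  calc |f x| / v x ≤ (|f x - g x| + |g x|) / v x := by
        gcongr
        · exact (hv x).le
        · calc |f x| = |(f x - g x) + g x| := by ring_nf
            _ ≤ |f x - g x| + |g x| := abs_add_le _ _
    _ = |f x - g x| / v x + |g x| / v x := add_div _ _ _
    _ ≤ wnorm v (fun x => f x - g x) + wnorm v g :=
        add_le_add (le_ciSup (bddAbove_of_memB hfg) x) (le_ciSup (bddAbove_of_memB hg) x)

lemma wnorm_nonneg (hv : ∀ x, 0 < v x) {J : X → ℝ} (hJ : memB v J) :
    0 ≤ wnorm v J := by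
  have x0 : X := Classical.arbitrary X
  exact le_trans (div_nonneg (abs_nonneg _) (hv x0).le) (le_ciSup (bddAbove_of_memB hJ) x0)

end Aux

/-- `T^{(λ)}` is well-defined `𝓑(X) → 𝓑(X)` and is a contraction
with modulus `α_λ = α(1-λ)/(1-λα)`. -/
theorem stmt6 {X : Type*} [Nonempty X] (v : X → ℝ) (hv : ∀ x, 0 < v x)
    (T : (X → ℝ) → (X → ℝ)) (α : ℝ) (hα : α ∈ Set.Ioo (0 : ℝ) 1)
    (hT : ∀ J, memB v J → memB v (T J))
    (hcontr : ∀ J J', memB v J → memB v J' →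
      wnorm v (fun x => T J x - T J' x) ≤ α * wnorm v (fun x => J x - J' x))
    (lam : ℝ) (hlam : lam ∈ Set.Ico (0 : ℝ) 1) :
    (∀ J, memB v J → memB v (Tlam T lam J)) ∧
    ∀ J J', memB v J → memB v J' →
      wnorm v (fun x => Tlam T lam J x - Tlam T lam J' x) ≤
        (α * (1 - lam) / (1 - lam * α)) * wnorm v (fun x => J x - J' x) := by
  obtain ⟨hα0, hα1⟩ := hα
  obtain ⟨hlam0, hlam1⟩ := hlam
  have h1α : (0:ℝ) < 1 - α := by linarith
  -- iterates stay in B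
  have hmem : ∀ (ℓ : ℕ) (J : X → ℝ), memB v J → memB v (T^[ℓ] J) := by
    intro ℓ
    induction ℓ with
    | zero => intro J h; simpa using h
    | succ n ih =>
      intro J h
      rw [Function.iterate_succ_apply]
      exact ih _ (hT _ h)
  -- iterated contraction estimate
  have hwn : ∀ (ℓ : ℕ) (J J' : X → ℝ), memB v J → memB v J' →
      wnorm v (fun x => T^[ℓ] J x - T^[ℓ] J' x) ≤
        α ^ ℓ * wnorm v (fun x => J x - J' x) := by
    intro ℓ
    induction ℓ with
    | zero => intro J J' _ _; simp
    | succ n ih =>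
      intro J J' hJ hJ'
      have h1 := hcontr (T^[n] J) (T^[n] J') (hmem n J hJ) (hmem n J' hJ')
      have h2 := ih J J' hJ hJ'
      calc wnorm v (fun x => T^[n+1] J x - T^[n+1] J' x)
          = wnorm v (fun x => T (T^[n] J) x - T (T^[n] J') x) := by
            simp [Function.iterate_succ_apply']
        _ ≤ α * wnorm v (fun x => T^[n] J x - T^[n] J' x) := h1
        _ ≤ α * (α ^ n * wnorm v (fun x => J x - J' x)) :=
            mul_le_mul_of_nonneg_left h2 hα0.le
        _ = α ^ (n+1) * wnorm v (fun x => J x - J' x) := by ring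
  -- uniform bound on iterates
  have key : ∀ J : X → ℝ, memB v J → ∃ M : ℝ, 0 ≤ M ∧
      ∀ (ℓ : ℕ) (x : X), |T^[ℓ+1] J x| ≤ M * v x := by
    intro J hJ
    obtain ⟨E, hEdef⟩ : ∃ E, E = wnorm v (fun x => T J x - J x) := ⟨_, rfl⟩
    have hEmem : memB v (fun x => T J x - J x) := memB_sub hv (hT J hJ) hJ
    have hE0 : 0 ≤ E := hEdef ▸ wnorm_nonneg hv hEmem
    obtain ⟨M, hMdef⟩ : ∃ M, M = wnorm v (T J) + E * α / (1 - α) := ⟨_, rfl⟩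
    have claim : ∀ ℓ : ℕ, wnorm v (T^[ℓ+1] J) + E * α ^ (ℓ+1) / (1 - α) ≤ M := by
      intro ℓ
      induction ℓ with
      | zero => rw [hMdef]; norm_num
      | succ n ih =>
        have hdiffmem : memB v (fun x => T^[n+2] J x - T^[n+1] J x) :=
          memB_sub hv (hmem (n+2) J hJ) (hmem (n+1) J hJ)
        have htri : wnorm v (T^[n+2] J) ≤
            wnorm v (fun x => T^[n+2] J x - T^[n+1] J x) + wnorm v (T^[n+1] J) :=
          wnorm_triangle hv hdiffmem (hmem (n+1) J hJ)
        have hstep : wnorm v (fun x => T^[n+2] J x - T^[n+1] J x) ≤ α ^ (n+1) * E := by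
          rw [hEdef]
          have := hwn (n+1) (T J) J (hT J hJ) hJ
          have heq : (fun x => T^[n+2] J x - T^[n+1] J x)
              = (fun x => T^[n+1] (T J) x - T^[n+1] J x) := by
            funext x
            rw [← Function.iterate_succ_apply]
          rw [heq]
          exact this
        have hpow : E * α ^ (n+1) / (1 - α) - α ^ (n+1) * E - E * α ^ (n+2) / (1 - α) ≥ 0 := by
          have : E * α ^ (n+1) / (1 - α) - α ^ (n+1) * E - E * α ^ (n+2) / (1 - α)
              = E * α ^ (n+1) * ((1 - (1 - α) - α) / (1 - α)) + 0 := by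
            field_simp
            ring
          rw [this]
          simp
        linarith [htri, hstep, ih]
    refine ⟨M, ?_, ?_⟩
    · have := claim 0
      norm_num at this
      have h0 : 0 ≤ wnorm v (T J) := wnorm_nonneg hv (hT J hJ)
      have h1 : 0 ≤ E * α / (1 - α) :=
        div_nonneg (mul_nonneg hE0 hα0.le) h1α.le
      linarith
    · intro ℓ x
      have h1 : |T^[ℓ+1] J x| ≤ wnorm v (T^[ℓ+1] J) * v x :=
        abs_le_wnorm hv (hmem (ℓ+1) J hJ) x
      have h2 : wnorm v (T^[ℓ+1] J) ≤ M := by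
        have := claim ℓ
        have h3 : 0 ≤ E * α ^ (ℓ+1) / (1 - α) :=
          div_nonneg (mul_nonneg hE0 (by positivity)) h1α.le
        linarith
      calc |T^[ℓ+1] J x| ≤ wnorm v (T^[ℓ+1] J) * v x := h1
        _ ≤ M * v x := mul_le_mul_of_nonneg_right h2 (hv x).le
  -- summability
  have hsum : ∀ (J : X → ℝ), memB v J → ∀ (M : ℝ),
      (∀ (ℓ : ℕ) (x : X), |T^[ℓ+1] J x| ≤ M * v x) → ∀ x,
      Summable (fun ℓ : ℕ => lam ^ ℓ * (T^[ℓ+1] J) x) := by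
    intro J _ M hM x
    apply Summable.of_norm_bounded (g := fun ℓ : ℕ => M * v x * lam ^ ℓ)
      ((summable_geometric_of_lt_one hlam0 hlam1).mul_left _)
    intro ℓ
    rw [Real.norm_eq_abs, abs_mul, abs_pow, abs_of_nonneg hlam0]
    calc lam ^ ℓ * |T^[ℓ+1] J x| ≤ lam ^ ℓ * (M * v x) := by
          apply mul_le_mul_of_nonneg_left (hM ℓ x) (by positivity)
      _ = M * v x * lam ^ ℓ := by ring
  -- membership of Tlam
  have hmemTlam : ∀ J : X → ℝ, memB v J → memB v (Tlam T lam J) := by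
    intro J hJ
    obtain ⟨M, hM0, hM⟩ := key J hJ
    refine ⟨M, fun x => ?_⟩
    rw [div_le_iff₀ (hv x)]
    have hgeo : HasSum (fun ℓ : ℕ => M * v x * lam ^ ℓ) (M * v x * (1 - lam)⁻¹) :=
      (hasSum_geometric_of_lt_one hlam0 hlam1).mul_left _
    have habs : |∑' ℓ : ℕ, lam ^ ℓ * T^[ℓ+1] J x| ≤ M * v x * (1 - lam)⁻¹ := by
      rw [← Real.norm_eq_abs]
      apply tsum_of_norm_bounded hgeo
      intro ℓ
      rw [Real.norm_eq_abs, abs_mul, abs_pow, abs_of_nonneg hlam0]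
      calc lam ^ ℓ * |T^[ℓ+1] J x| ≤ lam ^ ℓ * (M * v x) :=
            mul_le_mul_of_nonneg_left (hM ℓ x) (by positivity)
        _ = M * v x * lam ^ ℓ := by ring
    have h1lam : (0:ℝ) < 1 - lam := by linarith
    show |(1 - lam) * ∑' ℓ : ℕ, lam ^ ℓ * T^[ℓ+1] J x| ≤ M * v x
    rw [abs_mul, abs_of_nonneg h1lam.le]
    calc (1 - lam) * |∑' ℓ : ℕ, lam ^ ℓ * T^[ℓ+1] J x|
        ≤ (1 - lam) * (M * v x * (1 - lam)⁻¹) :=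
          mul_le_mul_of_nonneg_left habs h1lam.le
      _ = M * v x := by field_simp
  refine ⟨hmemTlam, ?_⟩
  -- contraction estimate
  intro J J' hJ hJ'
  obtain ⟨D, hDdef⟩ : ∃ D, D = wnorm v (fun x => J x - J' x) := ⟨_, rfl⟩
  rw [← hDdef]
  have hla0 : (0:ℝ) ≤ lam * α := mul_nonneg hlam0 hα0.le
  have hla1 : lam * α < 1 := by nlinarith
  have h1la : (0:ℝ) < 1 - lam * α := by linarith
  obtain ⟨M, hM0, hM⟩ := key J hJ
  obtain ⟨M', hM'0, hM'⟩ := key J' hJ'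
  apply ciSup_le
  intro x
  rw [div_le_iff₀ (hv x)]
  have hs : Summable (fun ℓ : ℕ => lam ^ ℓ * (T^[ℓ+1] J) x) := hsum J hJ M hM x
  have hs' : Summable (fun ℓ : ℕ => lam ^ ℓ * (T^[ℓ+1] J') x) := hsum J' hJ' M' hM' x
  have heq : Tlam T lam J x - Tlam T lam J' x
      = (1 - lam) * ∑' ℓ : ℕ, lam ^ ℓ * (T^[ℓ+1] J x - T^[ℓ+1] J' x) := by
    show (1 - lam) * ∑' ℓ : ℕ, lam ^ ℓ * T^[ℓ+1] J x
        - (1 - lam) * ∑' ℓ : ℕ, lam ^ ℓ * T^[ℓ+1] J' x = _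
    rw [← mul_sub, ← hs.tsum_sub hs']
    congr 1
    exact tsum_congr fun ℓ => (mul_sub _ _ _).symm
  have hgeo : HasSum (fun ℓ : ℕ => (lam * α) ^ ℓ * (α * (D * v x)))
      ((1 - lam * α)⁻¹ * (α * (D * v x))) :=
    (hasSum_geometric_of_lt_one hla0 hla1).mul_right _
  have habs : |∑' ℓ : ℕ, lam ^ ℓ * (T^[ℓ+1] J x - T^[ℓ+1] J' x)|
      ≤ (1 - lam * α)⁻¹ * (α * (D * v x)) := by
    rw [← Real.norm_eq_abs]
    apply tsum_of_norm_bounded hgeo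
    intro ℓ
    rw [Real.norm_eq_abs, abs_mul, abs_pow, abs_of_nonneg hlam0]
    have hdmem : memB v (fun x => T^[ℓ+1] J x - T^[ℓ+1] J' x) :=
      memB_sub hv (hmem (ℓ+1) J hJ) (hmem (ℓ+1) J' hJ')
    have h1 : |T^[ℓ+1] J x - T^[ℓ+1] J' x|
        ≤ wnorm v (fun x => T^[ℓ+1] J x - T^[ℓ+1] J' x) * v x :=
      abs_le_wnorm hv hdmem x
    have h2 : wnorm v (fun x => T^[ℓ+1] J x - T^[ℓ+1] J' x) * v x
        ≤ α ^ (ℓ+1) * D * v x := by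
      apply mul_le_mul_of_nonneg_right _ (hv x).le
      rw [hDdef]
      exact hwn (ℓ+1) J J' hJ hJ'
    calc lam ^ ℓ * |T^[ℓ+1] J x - T^[ℓ+1] J' x|
        ≤ lam ^ ℓ * (α ^ (ℓ+1) * D * v x) :=
          mul_le_mul_of_nonneg_left (h1.trans h2) (by positivity)
      _ = (lam * α) ^ ℓ * (α * (D * v x)) := by
          rw [mul_pow]; ring
  show |Tlam T lam J x - Tlam T lam J' x| ≤ α * (1 - lam) / (1 - lam * α) * D * v x
  rw [heq, abs_mul, abs_of_nonneg (by linarith : (0:ℝ) ≤ 1 - lam)]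
  calc (1 - lam) * |∑' ℓ : ℕ, lam ^ ℓ * (T^[ℓ+1] J x - T^[ℓ+1] J' x)|
      ≤ (1 - lam) * ((1 - lam * α)⁻¹ * (α * (D * v x))) :=
        mul_le_mul_of_nonneg_left habs (by linarith)
    _ = α * (1 - lam) / (1 - lam * α) * D * v x := by
        field_simp
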